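/- Let a > b > 0, let A be a complex n×n matrix whose spectrum belongs to E_i = {λ ∈ ℂ : (Re λ)²/a² + (Im λ)²/b² < 1}, and let H be a Hermitian positive definite matrix satisfying H − (1/(2a²) + 1/(2b²))·A*HA − (1/(4a²) − 1/(4b²))·(HA² + (A*)²H) = I. If B is a complex n×n matrix such that (1/(2a²) + 1/(2b²))·(B*HA + A*HB + B*HB) + (1/(4a²) − 1/(4b²))·(H(AB + BA + B²) + (AB + BA + B²)*H) < I (i.e., I minus this matrix is positive definite), then the spectrum of A + B also belongs to E_i. -/

import Mathlib

open Matrix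
open scoped ComplexOrder

/-- Perturbation theorem for the interior of the ellipse: if the spectrum of `A`
lies in `E_i`, `H > 0` solves the elliptic Lyapunov-type equation with right-hand
side `I`, and the perturbation `B` satisfies the matrix inequality (9), then the
spectrum of `A + B` also lies in `E_i`. -/
theorem spectrum_perturbed_in_ellipse {n : ℕ} (a b : ℝ) (hba : b < a) (hb : 0 < b)
    (A : Matrix (Fin n) (Fin n) ℂ)
    (hA : ∀ μ ∈ spectrum ℂ A, μ.re ^ 2 / a ^ 2 + μ.im ^ 2 / b ^ 2 < 1)
    (H : Matrix (Fin n) (Fin n) ℂ) (hH : H.PosDef)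
    (heq : H - ((1 / (2 * a ^ 2) + 1 / (2 * b ^ 2) : ℝ) : ℂ) • (Aᴴ * H * A)
      - ((1 / (4 * a ^ 2) - 1 / (4 * b ^ 2) : ℝ) : ℂ) • (H * A ^ 2 + Aᴴ ^ 2 * H) = 1)
    (B : Matrix (Fin n) (Fin n) ℂ)
    (hB : (1 - (((1 / (2 * a ^ 2) + 1 / (2 * b ^ 2) : ℝ) : ℂ) • (Bᴴ * H * A + Aᴴ * H * B + Bᴴ * H * B)
      + ((1 / (4 * a ^ 2) - 1 / (4 * b ^ 2) : ℝ) : ℂ) •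
        (H * (A * B + B * A + B ^ 2) + (A * B + B * A + B ^ 2)ᴴ * H))).PosDef) :
    ∀ μ ∈ spectrum ℂ (A + B), μ.re ^ 2 / a ^ 2 + μ.im ^ 2 / b ^ 2 < 1 := by
  intro μ hμ
  have ha : (0:ℝ) < a := hb.trans hba
  set c1 : ℝ := 1 / (2 * a ^ 2) + 1 / (2 * b ^ 2) with hc1
  set c2 : ℝ := 1 / (4 * a ^ 2) - 1 / (4 * b ^ 2) with hc2
  set C : Matrix (Fin n) (Fin n) ℂ := A + B with hCdef
  -- eigenvector
  have hμ' : Module.End.HasEigenvalue (Matrix.toLin' C) μ := by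
    rw [Module.End.hasEigenvalue_iff_mem_spectrum]
    have := AlgEquiv.spectrum_eq (Matrix.toLinAlgEquiv' : Matrix (Fin n) (Fin n) ℂ ≃ₐ[ℂ] _) C
    rw [show (Matrix.toLinAlgEquiv' C : (Fin n → ℂ) →ₗ[ℂ] (Fin n → ℂ)) = Matrix.toLin' C from rfl] at this
    rw [this]
    exact hμ
  obtain ⟨v, hv⟩ := hμ'.exists_hasEigenvector
  have hv0 : v ≠ 0 := hv.2
  have hCv : C *ᵥ v = μ • v := by
    have := hv.apply_eq_smul
    simpa [Matrix.toLin'_apply] using this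
  set d : ℂ := star v ⬝ᵥ (H *ᵥ v) with hd
  have hdpos : 0 < d := hH.dotProduct_mulVec_pos hv0
  -- key matrix identity
  have key : (1 : Matrix (Fin n) (Fin n) ℂ) - (((c1 : ℝ) : ℂ) • (Bᴴ * H * A + Aᴴ * H * B + Bᴴ * H * B)
      + ((c2 : ℝ) : ℂ) • (H * (A * B + B * A + B ^ 2) + (A * B + B * A + B ^ 2)ᴴ * H))
      = H - ((c1 : ℝ) : ℂ) • (Cᴴ * H * C) - ((c2 : ℝ) : ℂ) • (H * C ^ 2 + Cᴴ ^ 2 * H) := by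
    rw [← heq, hCdef]
    simp only [conjTranspose_add, conjTranspose_mul, sq, mul_add, add_mul, smul_add, smul_sub]
    module
  have h0 : 0 < star v ⬝ᵥ ((H - ((c1 : ℝ) : ℂ) • (Cᴴ * H * C)
      - ((c2 : ℝ) : ℂ) • (H * C ^ 2 + Cᴴ ^ 2 * H)) *ᵥ v) := key ▸ hB.dotProduct_mulVec_pos hv0
  -- evaluate the quadratic form
  have e0 : ∀ w : Fin n → ℂ, star v ⬝ᵥ (Cᴴ *ᵥ w) = star μ * (star v ⬝ᵥ w) := by
    intro w
    rw [dotProduct_mulVec, ← star_mulVec, hCv, star_smul, smul_dotProduct]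
    rfl
  have e1 : star v ⬝ᵥ ((Cᴴ * H * C) *ᵥ v) = star μ * μ * d := by
    rw [← Matrix.mulVec_mulVec, ← Matrix.mulVec_mulVec, hCv, Matrix.mulVec_smul, e0,
      dotProduct_smul, smul_eq_mul]
    ring
  have e2 : star v ⬝ᵥ ((H * C ^ 2) *ᵥ v) = μ ^ 2 * d := by
    rw [sq, ← Matrix.mulVec_mulVec, ← Matrix.mulVec_mulVec, hCv]
    simp only [Matrix.mulVec_smul, hCv, dotProduct_smul, smul_eq_mul]
    ring
  have e3 : star v ⬝ᵥ ((Cᴴ ^ 2 * H) *ᵥ v) = (star μ) ^ 2 * d := by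
    rw [sq, ← Matrix.mulVec_mulVec, ← Matrix.mulVec_mulVec, e0, e0]
    ring
  rw [Matrix.sub_mulVec, Matrix.sub_mulVec, dotProduct_sub, dotProduct_sub,
    Matrix.smul_mulVec, Matrix.smul_mulVec, dotProduct_smul, dotProduct_smul,
    Matrix.add_mulVec, dotProduct_add, e1, e2, e3] at h0
  -- now complex to real
  have hdim : d.im = 0 := ((Complex.lt_def).mp hdpos).2.symm
  have hdre : 0 < d.re := by
    have := (Complex.lt_def).mp hdpos
    simpa using this.1
  have h1 : 0 < (1 - ((c1:ℝ):ℂ) * (star μ * μ) - ((c2:ℝ):ℂ) * (μ ^ 2 + (star μ) ^ 2)) * d := by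
    simp only [smul_eq_mul] at h0
    convert h0 using 1
    ring
  set s : ℂ := 1 - ((c1:ℝ):ℂ) * (star μ * μ) - ((c2:ℝ):ℂ) * (μ ^ 2 + (star μ) ^ 2) with hs
  have h2 : 0 < (s * d).re := by
    have := (Complex.lt_def).mp h1
    simpa using this.1
  have h3 : (s * d).re = s.re * d.re := by
    rw [Complex.mul_re, hdim]
    ring
  have hsre : 0 < s.re := by
    rw [h3] at h2
    nlinarith
  have hsval : s.re = 1 - c1 * (μ.re ^ 2 + μ.im ^ 2) - c2 * (2 * μ.re ^ 2 - 2 * μ.im ^ 2) := by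
    simp only [hs, Complex.sub_re, Complex.one_re, Complex.mul_re, Complex.mul_im,
      Complex.add_re, Complex.add_im, Complex.ofReal_re, Complex.ofReal_im,
      Complex.star_def, Complex.conj_re, Complex.conj_im, pow_two]
    ring
  have ha2 : a ^ 2 ≠ 0 := by positivity
  have hb2 : b ^ 2 ≠ 0 := by positivity
  have hident : μ.re ^ 2 / a ^ 2 + μ.im ^ 2 / b ^ 2
      = c1 * (μ.re ^ 2 + μ.im ^ 2) + c2 * (2 * μ.re ^ 2 - 2 * μ.im ^ 2) := by
    rw [hc1, hc2]
    field_simp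
    ring
  rw [hsval] at hsre
  rw [hident]
  clear_value c1 c2
  linarith
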